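/- Let n, m be natural numbers with n, m ∉ {0, 1}. If s(n) ~ s(m), then n and m have the same set of prime divisors. -/

import Mathlib

noncomputable section
set_option maxHeartbeats 1000000
open scoped TensorProduct

instance (p : Nat.Primes) : Fact (p : ℕ).Prime := ⟨p.2⟩

/-- The profinite integers `Ẑ = ∏_p ℤ_p`. -/
abbrev ZHat : Type := ∀ p : Nat.Primes, ℤ_[(p : ℕ)]

/-- The finite adele ring `𝔸_f = Ẑ ⊗ ℚ` of `ℚ`. -/
abbrev AF : Type := ZHat ⊗[ℤ] ℚ

/-- The embedding `Ẑ ⊆ 𝔸_f`. -/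
def iZ : ZHat →+* AF := Algebra.TensorProduct.includeLeftRingHom

/-- The diagonal embedding `ℚ ⊆ 𝔸_f`. -/
def iQ : ℚ →+* AF :=
  (Algebra.TensorProduct.includeRight (R := ℤ) (A := ZHat) (B := ℚ)).toRingHom

/-- The relation `z ~ z'` on `𝔸_f`: there are `a, b, c, d ∈ ℚ` with `ad − bc ≠ 0`,
`a + c·z` a unit of `𝔸_f`, and `(b + d·z)·(a + c·z)⁻¹ − z'` in the diagonal image
of `ℚ` (the partially defined `PGL₂(ℚ)`-action `z ↦ (b+dz)/(a+cz)`). -/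
def adeleRel (z z' : AF) : Prop :=
  ∃ a b c d : ℚ, a * d - b * c ≠ 0 ∧
    ∃ w : AF, (iQ a + iQ c * z) * w = 1 ∧
      ∃ q : ℚ, (iQ b + iQ d * z) * w - z' = iQ q

/-- The profinite integer `s(n)` whose `p`-th component is `p^{v_p(n)}`, the largest
power of `p` dividing `n` (with component `0` when `n = 0`). -/
def sFun (n : ℕ) : ZHat :=
  fun p => if n = 0 then 0 else ((p : ℕ) : ℤ_[(p : ℕ)]) ^ (n.factorization (p : ℕ))

/-- Evaluation of the finite adeles at a prime `p`, landing in `ℚ_p`. -/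
def evalAF (p : Nat.Primes) : AF →ₐ[ℤ] ℚ_[(p : ℕ)] :=
  Algebra.TensorProduct.productMap
    ((PadicInt.Coe.ringHom.comp
      (Pi.evalRingHom (fun q : Nat.Primes => ℤ_[(q : ℕ)]) p)).toIntAlgHom)
    ((Rat.castHom ℚ_[(p : ℕ)]).toIntAlgHom)

lemma evalAF_iZ (p : Nat.Primes) (x : ZHat) : evalAF p (iZ x) = ((x p : ℤ_[(p : ℕ)]) : ℚ_[(p : ℕ)]) := by
  simp only [iZ, Algebra.TensorProduct.includeLeftRingHom_apply,
    evalAF, Algebra.TensorProduct.productMap_apply_tmul]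
  erw [Algebra.TensorProduct.productMap_apply_tmul]
  simp
  rfl

lemma evalAF_iQ (p : Nat.Primes) (r : ℚ) : evalAF p (iQ r) = (r : ℚ_[(p : ℕ)]) := by
  simp [evalAF, iQ, Algebra.TensorProduct.includeRight_apply,
    Algebra.TensorProduct.productMap_apply_tmul]
  erw [Algebra.TensorProduct.productMap_apply_tmul, map_one, one_mul]
  rfl

lemma evalAF_sFun (p : Nat.Primes) (n : ℕ) (hn : n ≠ 0) :
    evalAF p (iZ (sFun n)) = ((((p : ℕ) : ℚ) ^ (n.factorization (p : ℕ)) : ℚ) : ℚ_[(p : ℕ)]) := by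
  rw [evalAF_iZ, sFun]
  simp only [hn, if_false]
  push_cast
  ring

lemma key1 (a b c d q A : ℚ) (hdet : a * d - b * c ≠ 0) (hA : A ≠ 1)
    (e1 : b + d = (1 + q) * (a + c)) (e2 : b + d * A = (1 + q) * (a + c * A)) : False := by
  have h1 : (d - (1 + q) * c) * (A - 1) = 0 := by linear_combination e2 - e1
  rcases mul_eq_zero.mp h1 with h | h
  · have hd : d = (1 + q) * c := by linarith
    have hb : b = (1 + q) * a := by linear_combination e1 - hd
    exact hdet (by linear_combination a * hd - c * hb)
  · exact hA (by linarith)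

lemma key2 (a b c d q B : ℚ) (hac : a + c ≠ 0) (hB : B ≠ 1)
    (e1 : b + d = (1 + q) * (a + c)) (e2 : b + d = (B + q) * (a + c)) : False := by
  have h1 : (B - 1) * (a + c) = 0 := by linear_combination e1 - e2
  rcases mul_eq_zero.mp h1 with h | h
  · exact hB (by linarith)
  · exact hac h

/-- if `n, m ∉ {0,1}` and `s(n) ~ s(m)`, then `n` and `m` have the same
prime divisors. -/
theorem rel_sFun_same_prime_divisors (n m : ℕ) (hn0 : n ≠ 0) (hn1 : n ≠ 1)
    (hm0 : m ≠ 0) (hm1 : m ≠ 1) (h : adeleRel (iZ (sFun n)) (iZ (sFun m))) :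
    ∀ p : ℕ, p.Prime → (p ∣ n ↔ p ∣ m) := by
  obtain ⟨a, b, c, d, hdet, w, hw, q, hq⟩ := h
  have hmain : iQ b + iQ d * iZ (sFun n) =
      (iZ (sFun m) + iQ q) * (iQ a + iQ c * iZ (sFun n)) := by
    rw [sub_eq_iff_eq_add] at hq
    have h1 : (iQ b + iQ d * iZ (sFun n)) * w = iZ (sFun m) + iQ q := by
      rw [hq, add_comm]
    have h2 : (iQ b + iQ d * iZ (sFun n)) * ((iQ a + iQ c * iZ (sFun n)) * w)
        = (iZ (sFun m) + iQ q) * (iQ a + iQ c * iZ (sFun n)) := by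
      rw [mul_left_comm, h1, mul_comm]
    rwa [hw, mul_one] at h2
  have hcomp : ∀ p : Nat.Primes,
      (a + c * ((p : ℕ) : ℚ) ^ (n.factorization (p : ℕ)) ≠ 0) ∧
      b + d * ((p : ℕ) : ℚ) ^ (n.factorization (p : ℕ))
        = (((p : ℕ) : ℚ) ^ (m.factorization (p : ℕ)) + q) *
            (a + c * ((p : ℕ) : ℚ) ^ (n.factorization (p : ℕ))) := by
    intro p
    have e1 := congrArg (evalAF p) hw
    have e2 := congrArg (evalAF p) hmain
    simp only [map_mul, map_add, map_one, evalAF_iQ, evalAF_sFun p n hn0,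
      evalAF_sFun p m hm0] at e1 e2
    push_cast at e1 e2
    constructor
    · intro h0
      have h0' : (a : ℚ_[(p : ℕ)]) + c * ((p : ℕ) : ℚ_[(p : ℕ)]) ^ (n.factorization (p : ℕ)) = 0 := by
        exact_mod_cast congrArg (fun t : ℚ => (t : ℚ_[(p : ℕ)])) h0
      rw [h0', zero_mul] at e1
      exact zero_ne_one e1
    · exact_mod_cast e2
  -- choose an auxiliary prime dividing neither n nor m
  obtain ⟨r, hrle, hrp⟩ := Nat.exists_infinite_primes (n * m + 1)
  have hrn : ¬ r ∣ n := fun hd => by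
    have : r ≤ n := Nat.le_of_dvd (Nat.pos_of_ne_zero hn0) hd
    have : n ≤ n * m := Nat.le_mul_of_pos_right n (Nat.pos_of_ne_zero hm0)
    omega
  have hrm : ¬ r ∣ m := fun hd => by
    have : r ≤ m := Nat.le_of_dvd (Nat.pos_of_ne_zero hm0) hd
    have : m ≤ n * m := Nat.le_mul_of_pos_left m (Nat.pos_of_ne_zero hn0)
    omega
  have hR := hcomp ⟨r, hrp⟩
  rw [Nat.factorization_eq_zero_of_not_dvd hrn, Nat.factorization_eq_zero_of_not_dvd hrm] at hR
  simp only [pow_zero, mul_one] at hR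
  obtain ⟨hac, hRe⟩ := hR
  have hRe' : b + d = (1 + q) * (a + c) := hRe
  intro p pp
  have hP := hcomp ⟨p, pp⟩
  have hp1 : (1 : ℚ) < (p : ℚ) := by exact_mod_cast pp.one_lt
  constructor
  · intro hpn
    by_contra hpm
    rw [Nat.factorization_eq_zero_of_not_dvd hpm] at hP
    simp only [pow_zero] at hP
    have hα : n.factorization p ≠ 0 := (pp.factorization_pos_of_dvd hn0 hpn).ne'
    have hA : ((p : ℕ) : ℚ) ^ (n.factorization p) ≠ 1 :=
      ne_of_gt (one_lt_pow₀ hp1 hα)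
    exact key1 a b c d q _ hdet hA hRe' hP.2
  · intro hpm
    by_contra hpn
    rw [Nat.factorization_eq_zero_of_not_dvd hpn] at hP
    simp only [pow_zero, mul_one] at hP
    have hβ : m.factorization p ≠ 0 := (pp.factorization_pos_of_dvd hm0 hpm).ne'
    have hB : ((p : ℕ) : ℚ) ^ (m.factorization p) ≠ 1 :=
      ne_of_gt (one_lt_pow₀ hp1 hβ)
    exact key2 a b c d q _ hac hB hRe' hP.2
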